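/- With G_0 = G and, for i = 1, …, k, o_i a scan order of G_{i−1} and F_i the earliest-neighbor forest of G_{i−1} with respect to o_i, for every positive integer l < k a set S ⊆ V is an l-separator of the graph on V with edge set F_1 ∪ … ∪ F_k if and only if S is an l-separator of G. -/

import Mathlib

set_option linter.unusedSectionVars false


/-- `o` is a scan order of `H`: an injective labelling such that every vertex that is not the
`o`-minimal vertex of its connected component of `H` has a neighbor with a smaller label. -/
def IsScanOrder {V : Type*} (H : SimpleGraph V) (o : V → ℕ) : Prop :=
  Function.Injective o ∧
    ∀ v w, H.Reachable v w → o w < o v → ∃ x, H.Adj v x ∧ o x < o v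

/-- The earliest-neighbor (scan-first search) forest of `H` with respect to `o`: for every
vertex `v` that is not the `o`-minimal vertex of its connected component of `H`, the edge
joining `v` to its neighbor `u` with `o u` minimal among all neighbors of `v`. -/
def earliestForest {V : Type*} (H : SimpleGraph V) (o : V → ℕ) : Set (Sym2 V) :=
  {e | ∃ v u, e = s(u, v) ∧ H.Adj v u ∧ (∃ w, H.Reachable v w ∧ o w < o v) ∧
    ∀ x, H.Adj v x → o u ≤ o x}

/-- `Gseq G F i` is the graph `G_i` on `V` with edge set `E(G) \ (F 0 ∪ ⋯ ∪ F (i-1))`. -/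
def Gseq {V : Type*} (G : SimpleGraph V) (F : ℕ → Set (Sym2 V)) (i : ℕ) : SimpleGraph V :=
  SimpleGraph.fromEdgeSet (G.edgeSet \ ⋃ j ∈ Finset.range i, F j)

/-- `S` is an `l`-separator of `H`: `S` has exactly `l` vertices and deleting `S` and all
incident edges yields a graph with strictly more connected components than `H`. -/
def IsLSeparator {V : Type*} [Fintype V] (H : SimpleGraph V) (l : ℕ) (S : Finset V) : Prop :=
  S.card = l ∧
    Nat.card H.ConnectedComponent <
      Nat.card (H.induce ((↑S : Set V)ᶜ)).ConnectedComponent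

section Aux

open SimpleGraph

variable {V : Type*}

/-- Graphs with the same reachability relation have the same number of components. -/
private lemma cc_card_eq (G₁ G₂ : SimpleGraph V)
    (h : ∀ a b : V, G₁.Reachable a b ↔ G₂.Reachable a b) :
    Nat.card G₁.ConnectedComponent = Nat.card G₂.ConnectedComponent := by
  refine Nat.card_congr
    ⟨ConnectedComponent.lift (fun v => G₂.connectedComponentMk v)
      (fun v w p _ => ConnectedComponent.sound ((h v w).1 p.reachable)),
     ConnectedComponent.lift (fun v => G₁.connectedComponentMk v)
      (fun v w p _ => ConnectedComponent.sound ((h v w).2 p.reachable)), ?_, ?_⟩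
  · exact fun c => ConnectedComponent.ind (fun v => rfl) c
  · exact fun c => ConnectedComponent.ind (fun v => rfl) c

/-- If every edge of `H` ends inside `s`, reachability in `H` transfers to `H.induce s`. -/
private lemma reach_induce_of_closed {H : SimpleGraph V} {s : Set V}
    (hH : ∀ v w, H.Adj v w → w ∈ s) :
    ∀ {a b : V} (_ : H.Walk a b) (ha : a ∈ s) (hb : b ∈ s),
      (H.induce s).Reachable ⟨a, ha⟩ ⟨b, hb⟩ := by
  intro a b p
  induction p with
  | nil => intro ha hb; exact Reachable.refl _
  | @cons u v w huv q ih =>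
    intro ha hb
    have hv : v ∈ s := hH u v huv
    have h1 : (H.induce s).Adj ⟨u, ha⟩ ⟨v, hv⟩ := huv
    exact h1.reachable.trans (ih hv hb)

private lemma induce_le_induce {H H' : SimpleGraph V} (h : H ≤ H') (s : Set V) :
    H.induce s ≤ H'.induce s := fun _ _ hxy => h hxy

variable [Fintype V] {G : SimpleGraph V} {k : ℕ} {o : ℕ → V → ℕ} {F : ℕ → Set (Sym2 V)}

private lemma edgeSet_Gseq (G : SimpleGraph V) (F : ℕ → Set (Sym2 V)) (i : ℕ) :
    (Gseq G F i).edgeSet = G.edgeSet \ ⋃ j ∈ Finset.range i, F j := by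
  rw [Gseq, edgeSet_fromEdgeSet]
  ext e
  simp only [Set.mem_diff, Set.mem_setOf_eq]
  exact ⟨fun h => h.1, fun h => ⟨h, G.not_isDiag_of_mem_edgeSet h.1⟩⟩

private lemma edgeSet_Gseq_zero (G : SimpleGraph V) (F : ℕ → Set (Sym2 V)) :
    (Gseq G F 0).edgeSet = G.edgeSet := by
  rw [edgeSet_Gseq]; simp

private lemma Gseq_mono (G : SimpleGraph V) (F : ℕ → Set (Sym2 V)) {i j : ℕ} (h : j ≤ i) :
    (Gseq G F i).edgeSet ⊆ (Gseq G F j).edgeSet := by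
  rw [edgeSet_Gseq, edgeSet_Gseq]
  intro e he
  refine ⟨he.1, fun hmem => he.2 ?_⟩
  simp only [Set.mem_iUnion] at hmem ⊢
  obtain ⟨m, hm, hme⟩ := hmem
  exact ⟨m, Finset.mem_range.2 (lt_of_lt_of_le (Finset.mem_range.1 hm) h), hme⟩

private lemma adj_Gseq_succ {j : ℕ} {x y : V} (hxy : (Gseq G F j).Adj x y)
    (hne : s(x, y) ∉ F j) : (Gseq G F (j + 1)).Adj x y := by
  rw [← SimpleGraph.mem_edgeSet] at hxy ⊢
  rw [edgeSet_Gseq] at hxy ⊢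
  refine ⟨hxy.1, fun hmem => ?_⟩
  simp only [Set.mem_iUnion] at hmem
  obtain ⟨m, hm, hme⟩ := hmem
  rcases Nat.lt_succ_iff_lt_or_eq.1 (Finset.mem_range.1 hm) with h | h
  · refine hxy.2 ?_
    simp only [Set.mem_iUnion]
    exact ⟨m, Finset.mem_range.2 h, hme⟩
  · exact hne (h ▸ hme)

private lemma notMem_Fj_of_Gseq_succ {j : ℕ} {x y : V}
    (hxy : (Gseq G F (j + 1)).Adj x y) : s(x, y) ∉ F j := by
  rw [← SimpleGraph.mem_edgeSet, edgeSet_Gseq] at hxy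
  intro hmem
  refine hxy.2 ?_
  simp only [Set.mem_iUnion]
  exact ⟨j, Finset.mem_range.2 (Nat.lt_succ_self j), hmem⟩

/-- The union of forests `F j, …, F (k-1)` restricted to edges avoiding `S`. -/
private def AvoidG (F : ℕ → Set (Sym2 V)) (j k : ℕ) (S : Finset V) : SimpleGraph V :=
  SimpleGraph.fromEdgeSet
    {e | (e ∈ ⋃ i ∈ Finset.Ico j k, F i) ∧ ∀ v ∈ e, v ∉ S}

private lemma avoidG_adj {j k : ℕ} {S : Finset V} {x y : V} :
    (AvoidG F j k S).Adj x y ↔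
      ((s(x, y) ∈ ⋃ i ∈ Finset.Ico j k, F i) ∧ ∀ v ∈ s(x, y), v ∉ S) ∧ x ≠ y := by
  rw [AvoidG, SimpleGraph.fromEdgeSet_adj]; rfl

private lemma mem_Hset {j k i : ℕ} {e : Sym2 V} (hi : i ∈ Finset.Ico j k) (he : e ∈ F i) :
    e ∈ ⋃ i ∈ Finset.Ico j k, F i := by
  simp only [Set.mem_iUnion]; exact ⟨i, hi, he⟩

private lemma avoidG_edges_closed {j k : ℕ} {S : Finset V} {v w : V}
    (h : (AvoidG F j k S).Adj v w) : w ∉ (S : Set V) := by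
  rw [avoidG_adj] at h
  exact h.1.2 w (Sym2.mem_mk_right v w)

section WithHyps

variable (hscan : ∀ i < k, IsScanOrder (Gseq G F i) (o i))
variable (hF : ∀ i < k, F i = earliestForest (Gseq G F i) (o i))

include hF in
private lemma F_subset_edgeSet {i : ℕ} (hi : i < k) : F i ⊆ (Gseq G F i).edgeSet := by
  intro e he
  rw [hF i hi] at he
  obtain ⟨v, u, rfl, hadj, -, -⟩ := he
  rw [Sym2.eq_swap]
  exact (SimpleGraph.mem_edgeSet _).2 hadj

include hF in
private lemma Hset_subset_edgeSet {j : ℕ} :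
    (⋃ i ∈ Finset.Ico j k, F i) ⊆ (Gseq G F j).edgeSet := by
  intro e he
  simp only [Set.mem_iUnion] at he
  obtain ⟨i, hi, hei⟩ := he
  rw [Finset.mem_Ico] at hi
  exact Gseq_mono G F hi.1 (F_subset_edgeSet hF hi.2 hei)

include hscan hF in
/-- Lemma A: a non-minimal vertex has its earliest-neighbor edge in `F j`. -/
private lemma exists_parent {j : ℕ} (hj : j < k) {v w : V}
    (hr : (Gseq G F j).Reachable v w) (hlt : o j w < o j v) :
    ∃ u, s(v, u) ∈ F j ∧ (Gseq G F j).Adj v u ∧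
      (∀ x, (Gseq G F j).Adj v x → o j u ≤ o j x) ∧ o j u < o j v := by
  classical
  obtain ⟨x, hx, hxlt⟩ := (hscan j hj).2 v w hr hlt
  have hNne : (Finset.univ.filter (fun z => (Gseq G F j).Adj v z)).Nonempty :=
    ⟨x, by simp [hx]⟩
  obtain ⟨u, hu, humin⟩ :=
    (Finset.univ.filter (fun z => (Gseq G F j).Adj v z)).exists_min_image (o j) hNne
  simp only [Finset.mem_filter, Finset.mem_univ, true_and] at hu
  have hmin : ∀ z, (Gseq G F j).Adj v z → o j u ≤ o j z := by
    intro z hz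
    exact humin z (by simp [hz])
  have hef : s(v, u) ∈ F j := by
    rw [hF j hj]
    exact ⟨v, u, Sym2.eq_swap, hu, ⟨w, hr, hlt⟩, hmin⟩
  exact ⟨u, hef, hu, hmin, lt_of_le_of_lt (hmin x hx) hxlt⟩

include hscan hF in
/-- Lemma B: a vertex whose label is below every label in `S` reaches the minimal vertex of
its `Gseq j`-component through `F j`-edges avoiding `S`. -/
private lemma reach_min {j : ℕ} (hj : j < k) (S : Finset V) :
    ∀ n v, o j v ≤ n → v ∉ S → (∀ t ∈ S, o j v < o j t) →
      ∃ z, (AvoidG F j k S).Reachable v z ∧ (Gseq G F j).Reachable v z ∧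
        ∀ w, (Gseq G F j).Reachable z w → o j z ≤ o j w := by
  intro n
  induction n with
  | zero =>
    intro v hv hvS hlt
    refine ⟨v, Reachable.refl _, Reachable.refl _, fun w hw => ?_⟩
    by_contra hcon
    push_neg at hcon
    obtain ⟨u, -, -, -, hult⟩ := exists_parent hscan hF hj hw (by omega)
    omega
  | succ n ih =>
    intro v hv hvS hlt
    by_cases hmin : ∀ w, (Gseq G F j).Reachable v w → o j v ≤ o j w
    · exact ⟨v, Reachable.refl _, Reachable.refl _, hmin⟩
    · push_neg at hmin
      obtain ⟨w, hw, hwlt⟩ := hmin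
      obtain ⟨u, huF, huadj, -, hult⟩ := exists_parent hscan hF hj hw hwlt
      have huS : u ∉ S := fun hu => absurd (hlt u hu) (by omega)
      have hlt' : ∀ t ∈ S, o j u < o j t := fun t ht => lt_trans hult (hlt t ht)
      obtain ⟨z, h1, h2, h3⟩ := ih u (by omega) huS hlt'
      have hadjA : (AvoidG F j k S).Adj v u := by
        rw [avoidG_adj]
        refine ⟨⟨mem_Hset (Finset.mem_Ico.2 ⟨le_rfl, hj⟩) huF, ?_⟩, huadj.ne⟩
        intro t ht
        rcases Sym2.mem_iff.1 ht with rfl | rfl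
        · exact hvS
        · exact huS
      exact ⟨z, hadjA.reachable.trans h1, huadj.reachable.trans h2, h3⟩

include hscan hF in
/-- Key lemma: any two vertices outside `S` that are `Gseq (j+1)`-adjacent to the
minimal-label element `s` of `S` are connected in the forest-union avoiding `S`. -/
private lemma key_reroute {j : ℕ} (hj : j < k) {S : Finset V} {s : V}
    (hmin : ∀ t ∈ S, o j s ≤ o j t) :
    ∀ a, a ∉ S → (Gseq G F (j + 1)).Adj a s →
      ∃ z, (AvoidG F j k S).Reachable a z ∧ (Gseq G F j).Reachable a z ∧
        ∀ w, (Gseq G F j).Reachable z w → o j z ≤ o j w := by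
  intro a haS hadj
  by_cases hamin : ∀ w, (Gseq G F j).Reachable a w → o j a ≤ o j w
  · exact ⟨a, Reachable.refl _, Reachable.refl _, hamin⟩
  · push_neg at hamin
    obtain ⟨w, hw, hwlt⟩ := hamin
    obtain ⟨u, huF, huadj, humin, hult⟩ := exists_parent hscan hF hj hw hwlt
    have hadj_j : (Gseq G F j).Adj a s := by
      rw [← SimpleGraph.mem_edgeSet] at hadj ⊢
      exact Gseq_mono G F (Nat.le_succ j) hadj
    have hus : u ≠ s := by
      rintro rfl
      exact notMem_Fj_of_Gseq_succ hadj huF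
    have huls : o j u < o j s :=
      lt_of_le_of_ne (humin s hadj_j) (fun h => hus ((hscan j hj).1 h))
    have huS : u ∉ S := fun hu => absurd (hmin u hu) (by omega)
    have hlt' : ∀ t ∈ S, o j u < o j t := fun t ht => lt_of_lt_of_le huls (hmin t ht)
    obtain ⟨z, h1, h2, h3⟩ := reach_min hscan hF hj S (o j u) u le_rfl huS hlt'
    have hadjA : (AvoidG F j k S).Adj a u := by
      rw [avoidG_adj]
      refine ⟨⟨mem_Hset (Finset.mem_Ico.2 ⟨le_rfl, hj⟩) huF, ?_⟩, huadj.ne⟩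
      intro t ht
      rcases Sym2.mem_iff.1 ht with rfl | rfl
      · exact haS
      · exact huS
    exact ⟨z, hadjA.reachable.trans h1, huadj.reachable.trans h2, h3⟩

include hscan hF in
private lemma key_pair {j : ℕ} (hj : j < k) {S : Finset V} {s : V}
    (hmin : ∀ t ∈ S, o j s ≤ o j t) {a b : V} (haS : a ∉ S) (hbS : b ∉ S)
    (ha : (Gseq G F (j + 1)).Adj a s) (hb : (Gseq G F (j + 1)).Adj b s) :
    (AvoidG F j k S).Reachable a b := by
  obtain ⟨za, ha1, ha2, ha3⟩ := key_reroute hscan hF hj hmin a haS ha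
  obtain ⟨zb, hb1, hb2, hb3⟩ := key_reroute hscan hF hj hmin b hbS hb
  have hadj_ja : (Gseq G F j).Adj a s := by
    rw [← SimpleGraph.mem_edgeSet] at ha ⊢
    exact Gseq_mono G F (Nat.le_succ j) ha
  have hadj_jb : (Gseq G F j).Adj b s := by
    rw [← SimpleGraph.mem_edgeSet] at hb ⊢
    exact Gseq_mono G F (Nat.le_succ j) hb
  have hr : (Gseq G F j).Reachable za zb :=
    (ha2.symm.trans (hadj_ja.reachable.trans
      (hadj_jb.reachable.symm.trans hb2)))
  have h1 : o j za ≤ o j zb := ha3 zb hr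
  have h2 : o j zb ≤ o j za := hb3 za hr.symm
  have : za = zb := (hscan j hj).1 (le_antisymm h1 h2)
  exact ha1.trans (this ▸ hb1.symm)

include hscan hF in
/-- Main lemma: any `Gseq j`-edge avoiding `S` connects its endpoints in the union of
the forests `F j, …, F (k-1)` avoiding `S`, provided `|S| + j + 1 ≤ k`. -/
private lemma main_lemma :
    ∀ d j, j + d = k → ∀ S : Finset V, S.card + j + 1 ≤ k →
      ∀ x y, x ∉ S → y ∉ S → (Gseq G F j).Adj x y →
        (AvoidG F j k S).Reachable x y := by
  intro d
  induction d with
  | zero =>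
    intro j hj S hcard
    omega
  | succ d ih =>
    classical
    intro j hj S hcard x y hxS hyS hxy
    have hjk : j < k := by omega
    by_cases hFe : s(x, y) ∈ F j
    · refine Adj.reachable ?_
      rw [avoidG_adj]
      refine ⟨⟨mem_Hset (Finset.mem_Ico.2 ⟨le_rfl, hjk⟩) hFe, ?_⟩, hxy.ne⟩
      intro t ht
      rcases Sym2.mem_iff.1 ht with rfl | rfl
      · exact hxS
      · exact hyS
    · have hxy1 : (Gseq G F (j + 1)).Adj x y := adj_Gseq_succ hxy hFe
      rcases S.eq_empty_or_nonempty with rfl | hSne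
      · -- `S = ∅`: use the forest `F j` directly
        obtain ⟨zx, hx1, hx2, hx3⟩ :=
          reach_min hscan hF hjk ∅ (o j x) x le_rfl (by simp) (by simp)
        obtain ⟨zy, hy1, hy2, hy3⟩ :=
          reach_min hscan hF hjk ∅ (o j y) y le_rfl (by simp) (by simp)
        have hr : (Gseq G F j).Reachable zx zy :=
          hx2.symm.trans (hxy.reachable.trans hy2)
        have : zx = zy :=
          (hscan j hjk).1 (le_antisymm (hx3 zy hr) (hy3 zx hr.symm))
        exact hx1.trans (this ▸ hy1.symm)
      · obtain ⟨s, hsS, hmin⟩ := S.exists_min_image (o j) hSne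
        have hcard' : (S.erase s).card + (j + 1) + 1 ≤ k := by
          have h1 : (S.erase s).card = S.card - 1 := Finset.card_erase_of_mem hsS
          have h2 : 1 ≤ S.card := Finset.card_pos.2 hSne
          omega
        have hxS' : x ∉ S.erase s := fun h => hxS (Finset.mem_of_mem_erase h)
        have hyS' : y ∉ S.erase s := fun h => hyS (Finset.mem_of_mem_erase h)
        have hR : (AvoidG F (j + 1) k (S.erase s)).Reachable x y :=
          ih (j + 1) (by omega) (S.erase s) hcard' x y hxS' hyS' hxy1
        obtain ⟨p⟩ := hR
        -- walk surgery: replace every visit of `s` using `key_pair`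
        have main : ∀ v y', (AvoidG F (j + 1) k (S.erase s)).Walk v y' → y' ∉ S →
            (v ∉ S → (AvoidG F j k S).Reachable v y') ∧
            (v = s → ∀ a, a ∉ S → (Gseq G F (j + 1)).Adj a s →
              (AvoidG F j k S).Reachable a y') := by
          intro v y' p
          induction p with
          | nil =>
            intro hy'S
            refine ⟨fun _ => Reachable.refl _, fun h => ?_⟩
            exfalso; rw [h] at hy'S; exact hy'S hsS
          | @cons v w y'' hvw q ihw =>
            intro hy''S
            have ihw' := ihw hy''S
            rw [avoidG_adj] at hvw
            obtain ⟨⟨hmem, havoid⟩, hne⟩ := hvw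
            have hGadj : (Gseq G F (j + 1)).Adj v w :=
              (SimpleGraph.mem_edgeSet _).1 (Hset_subset_edgeSet hF hmem)
            constructor
            · intro hvS
              by_cases hwS : w ∈ S
              · have hws : w = s := by
                  by_contra hws
                  exact havoid w (Sym2.mem_mk_right v w)
                    (Finset.mem_erase.2 ⟨hws, hwS⟩)
                exact ihw'.2 hws v hvS (hws ▸ hGadj)
              · have hadjA : (AvoidG F j k S).Adj v w := by
                  rw [avoidG_adj]
                  refine ⟨⟨?_, ?_⟩, hne⟩
                  · simp only [Set.mem_iUnion] at hmem ⊢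
                    obtain ⟨i, hi, hei⟩ := hmem
                    rw [Finset.mem_Ico] at hi
                    exact ⟨i, Finset.mem_Ico.2 ⟨by omega, hi.2⟩, hei⟩
                  · intro t ht
                    rcases Sym2.mem_iff.1 ht with rfl | rfl
                    · exact hvS
                    · exact hwS
                exact hadjA.reachable.trans (ihw'.1 hwS)
            · intro hvs a haS haAdj
              have hwS : w ∉ S := by
                intro hwS
                have hws : w = s := by
                  by_contra hws
                  exact havoid w (Sym2.mem_mk_right v w)
                    (Finset.mem_erase.2 ⟨hws, hwS⟩)
                exact hne (hvs.trans hws.symm)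
              have hwAdj : (Gseq G F (j + 1)).Adj w s := (hvs ▸ hGadj).symm
              exact (key_pair hscan hF hjk hmin haS hwS haAdj hwAdj).trans
                (ihw'.1 hwS)
        exact (main x y p hyS).1 hxS

end WithHyps

end Aux

/-- With `G_0 = G` and, for `i = 1, …, k`, `o_i` a scan order of `G_(i-1)` and `F_i` the
earliest-neighbor forest of `G_(i-1)` with respect to `o_i`, for every positive `l < k` a
set `S` is an `l`-separator of the graph with edge set `F_1 ∪ ⋯ ∪ F_k` iff it is an
`l`-separator of `G`. -/
theorem scanForests_separators_iff {V : Type*} [Fintype V] (G : SimpleGraph V)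
    (k : ℕ) (hk : 0 < k)
    (o : ℕ → V → ℕ) (F : ℕ → Set (Sym2 V))
    (hscan : ∀ i < k, IsScanOrder (Gseq G F i) (o i))
    (hF : ∀ i < k, F i = earliestForest (Gseq G F i) (o i)) :
    ∀ l : ℕ, 0 < l → l < k → ∀ S : Finset V,
      IsLSeparator (SimpleGraph.fromEdgeSet (⋃ i ∈ Finset.range k, F i)) l S ↔
        IsLSeparator G l S := by
  classical
  set U : Set (Sym2 V) := ⋃ i ∈ Finset.range k, F i with hU
  have hU_Ico : U = ⋃ i ∈ Finset.Ico 0 k, F i := by rw [hU, Finset.range_eq_Ico]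
  have hUsub : U ⊆ G.edgeSet := by
    rw [hU_Ico]
    intro e he
    have := Hset_subset_edgeSet (G := G) (k := k) hF he
    rwa [edgeSet_Gseq_zero] at this
  have hHle : SimpleGraph.fromEdgeSet U ≤ G := by
    intro a b hab
    rw [SimpleGraph.fromEdgeSet_adj] at hab
    exact (SimpleGraph.mem_edgeSet _).1 (hUsub hab.1)
  have hG0adj : ∀ {a b : V}, G.Adj a b → (Gseq G F 0).Adj a b := by
    intro a b hab
    rw [← SimpleGraph.mem_edgeSet, edgeSet_Gseq_zero]
    exact (SimpleGraph.mem_edgeSet _).2 hab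
  have hAvoid_le : ∀ S : Finset V, AvoidG F 0 k S ≤ SimpleGraph.fromEdgeSet U := by
    intro S a b hab
    rw [avoidG_adj] at hab
    rw [SimpleGraph.fromEdgeSet_adj]
    exact ⟨hU_Ico ▸ hab.1.1, hab.2⟩
  -- reachability in `G` and in `fromEdgeSet U` coincide
  have hreach1 : ∀ a b : V,
      (SimpleGraph.fromEdgeSet U).Reachable a b ↔ G.Reachable a b := by
    intro a b
    constructor
    · exact fun h => h.mono hHle
    · intro h
      obtain ⟨p⟩ := h
      induction p with
      | nil => exact SimpleGraph.Reachable.refl _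
      | @cons u v w huv q ihq =>
        have h1 : (AvoidG F 0 k (∅ : Finset V)).Reachable u v :=
          main_lemma hscan hF k 0 (by omega) ∅ (by simpa using Nat.succ_le_of_lt hk) u v
            (by simp) (by simp) (hG0adj huv)
        exact (h1.mono (hAvoid_le ∅)).trans ihq
  -- reachability in the induced graphs coincide for small `S`
  have hreach2 : ∀ S : Finset V, S.card + 1 ≤ k →
      ∀ a b : ((↑S : Set V)ᶜ : Set V),
        ((SimpleGraph.fromEdgeSet U).induce ((↑S : Set V)ᶜ)).Reachable a b ↔
          (G.induce ((↑S : Set V)ᶜ)).Reachable a b := by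
    intro S hS a b
    constructor
    · exact fun h => h.mono (induce_le_induce hHle _)
    · intro h
      obtain ⟨p⟩ := h
      induction p with
      | nil => exact SimpleGraph.Reachable.refl _
      | @cons u v w huv q ihq =>
        have huS : (u : V) ∉ S := by
          have h2 := u.2; rw [Set.mem_compl_iff] at h2
          exact fun hc => h2 (Finset.mem_coe.2 hc)
        have hvS : (v : V) ∉ S := by
          have h2 := v.2; rw [Set.mem_compl_iff] at h2
          exact fun hc => h2 (Finset.mem_coe.2 hc)
        have h1 : (AvoidG F 0 k S).Reachable (u : V) (v : V) :=
          main_lemma hscan hF k 0 (by omega) S (by omega) u v huS hvS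
            (hG0adj huv)
        obtain ⟨q1⟩ := h1
        have h2 : ((AvoidG F 0 k S).induce ((↑S : Set V)ᶜ)).Reachable
            ⟨(u : V), u.2⟩ ⟨(v : V), v.2⟩ :=
          reach_induce_of_closed
            (fun x y hxy => avoidG_edges_closed hxy) q1 u.2 v.2
        have h3 : ((SimpleGraph.fromEdgeSet U).induce ((↑S : Set V)ᶜ)).Reachable u v :=
          h2.mono (induce_le_induce (hAvoid_le S) _)
        exact h3.trans ihq
  intro l hl hlk S
  constructor
  · rintro ⟨hc, hlt⟩
    refine ⟨hc, ?_⟩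
    rw [← cc_card_eq _ _ hreach1,
      ← cc_card_eq _ _ (hreach2 S (by omega) )]
    exact hlt
  · rintro ⟨hc, hlt⟩
    refine ⟨hc, ?_⟩
    rw [cc_card_eq _ _ hreach1,
      cc_card_eq _ _ (hreach2 S (by omega))]
    exact hlt
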